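/- Let H be a real Hilbert space and let A : H →L[ℝ] H be a continuous linear operator that is self-adjoint (⟪A x, y⟫ = ⟪x, A y⟫ for all x, y) and positive (⟪A x, x⟫ ≥ 0 for all x). Let g ∈ H and suppose (g_ε)_{ε>0} is a family in H such that ε·(A g_ε) + g_ε = g for every ε > 0. Then g_ε converges to g in H as ε → 0 from the right: the map ε ↦ g_ε tends to g along the filter of punctured right-neighborhoods of 0. (Consequence of the ε-approximation property: the Robin approximation recovers the Dirichlet datum in the vanishing-regularization limit.) -/

import Mathlib

open RealInnerProductSpace

/-- The Robin approximation recovers the Dirichlet datum in the vanishing-regularization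
limit: if `ε • A (gε ε) + gε ε = g` for all `ε > 0`, with `A` self-adjoint and positive,
then `gε ε → g` as `ε → 0⁺`. -/
theorem robin_approximation_tendsto
    {H : Type*} [NormedAddCommGroup H] [InnerProductSpace ℝ H] [CompleteSpace H]
    (A : H →L[ℝ] H)
    (hsa : ∀ x y : H, ⟪A x, y⟫ = ⟪x, A y⟫)
    (hpos : ∀ x : H, 0 ≤ ⟪A x, x⟫)
    (g : H) (gε : ℝ → H)
    (hrel : ∀ ε : ℝ, 0 < ε → ε • A (gε ε) + gε ε = g) :
    Filter.Tendsto gε (nhdsWithin 0 (Set.Ioi 0)) (nhds g) := by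
  set C : ℝ := ‖g‖ * ‖A g‖ with hC
  have hCnn : 0 ≤ C := mul_nonneg (norm_nonneg _) (norm_nonneg _)
  have key : ∀ ε : ℝ, 0 < ε → ‖gε ε - g‖ ^ 2 ≤ ε * C := by
    intro ε hε
    set x := gε ε with hx
    have hgx : g - x = ε • A x := by
      have := hrel ε hε
      rw [← this]; abel
    -- ‖x‖ ≤ ‖g‖
    have hxg : ‖x‖ ≤ ‖g‖ := by
      have hsq : ‖g‖ ^ 2 = ‖x‖ ^ 2 + 2 * (ε * ⟪A x, x⟫) + ‖ε • A x‖ ^ 2 := by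
        have : g = x + ε • A x := by rw [← hrel ε hε]; abel
        rw [this, norm_add_sq_real, inner_smul_right, real_inner_comm]
      have h1 : ‖x‖ ^ 2 ≤ ‖g‖ ^ 2 := by
        nlinarith [hpos x, sq_nonneg ‖ε • A x‖, hε.le]
      exact (pow_le_pow_iff_left₀ (norm_nonneg x) (norm_nonneg g) two_ne_zero).mp h1
    have h2 : ‖x - g‖ ^ 2 = ε * ⟪A x, g - x⟫ := by
      rw [← norm_neg, neg_sub, ← real_inner_self_eq_norm_sq]
      nth_rewrite 1 [hgx]
      rw [inner_smul_left]
      simp [hgx]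
    have h3 : ⟪A x, g - x⟫ ≤ ⟪x, A g⟫ := by
      rw [inner_sub_right, ← hsa]
      linarith [hpos x]
    have h4 : ⟪x, A g⟫ ≤ C := by
      calc ⟪x, A g⟫ ≤ ‖x‖ * ‖A g‖ := real_inner_le_norm _ _
        _ ≤ ‖g‖ * ‖A g‖ := by gcongr
    calc ‖x - g‖ ^ 2 = ε * ⟪A x, g - x⟫ := h2
      _ ≤ ε * C := by
          apply mul_le_mul_of_nonneg_left (h3.trans h4) hε.le
  -- squeeze
  rw [tendsto_iff_norm_sub_tendsto_zero]
  apply squeeze_zero' (Filter.Eventually.of_forall fun _ => norm_nonneg _)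
    (g := fun ε => Real.sqrt (ε * C))
  · filter_upwards [self_mem_nhdsWithin] with ε (hε : ε ∈ Set.Ioi 0)
    rw [show gε ε - g = -(g - gε ε) by abel, norm_neg] at *
    have := key ε hε
    rw [show gε ε - g = -(g - gε ε) by abel, norm_neg] at this
    exact (Real.le_sqrt (norm_nonneg _) (mul_nonneg hε.le hCnn)).mpr this
  · have : Filter.Tendsto (fun ε : ℝ => ε * C) (nhdsWithin 0 (Set.Ioi 0)) (nhds 0) := by
      have h0 : Filter.Tendsto (fun ε : ℝ => ε * C) (nhds 0) (nhds 0) := by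
        have := (continuous_mul_const C).tendsto (0 : ℝ)
        rwa [zero_mul] at this
      exact h0.mono_left nhdsWithin_le_nhds
    have h := (Real.continuous_sqrt.tendsto 0).comp this
    rw [Real.sqrt_zero] at h
    exact h
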